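/- Let n ≥ 3 be an integer and p > 3 a prime with p ≡ 1 (mod n), and set m = (p−1)/n. Then ∑_{k=0}^{p−1−m} C(m+k, m)^n · (∑_{i=1}^{k+m} 1/i − ∑_{i=1}^{k} 1/i) · ∑_{i=1}^{k+m} 1/i ≡ 0 (mod p), as a congruence of p-integral rationals. -/

import Mathlib

open Finset Polynomial Nat

namespace HPV19
variable {p : ℕ} [Fact p.Prime]


noncomputable def Hr (p : ℕ) (k : ℕ) : ZMod p := ∑ i ∈ range k, ((i : ZMod p) + 1)⁻¹

lemma cast_refl {j : ℕ} (hj : j < p) : ((p - 1 - j : ℕ) : ZMod p) = -((j : ZMod p) + 1) := by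
  have h : (p - 1 - j) + (j + 1) = p := by omega
  have := congrArg (Nat.cast : ℕ → ZMod p) h
  push_cast at this
  rw [ZMod.natCast_self] at this
  linear_combination this

lemma hr_refl_aux (k : ℕ) (hk : k ≤ p - 1) :
    Hr p (p - 1 - k) - Hr p k = Hr p (p - 1) := by
  induction k with
  | zero => simp [Hr]
  | succ k ih =>
    have hk' : k ≤ p - 1 := by omega
    have hp2 : (2:ℕ) ≤ p := (Fact.out : p.Prime).two_le
    have h1 : p - 1 - k = (p - 1 - (k+1)) + 1 := by omega
    have e1 : Hr p (p - 1 - k) = Hr p (p - 1 - (k+1)) + (((p - 1 - (k+1) : ℕ) : ZMod p) + 1)⁻¹ := by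
      rw [h1, Hr, Finset.sum_range_succ]; rfl
    have e2 : ((p - 1 - (k+1) : ℕ) : ZMod p) = -(((k:ZMod p)+1) + 1) := by
      have := cast_refl (p := p) (j := k+1) (by omega)
      push_cast at this ⊢; linear_combination this
    have e3 : Hr p (k+1) = Hr p k + ((k:ZMod p)+1)⁻¹ := by
      rw [Hr, Finset.sum_range_succ]; rfl
    rw [← ih hk', e1, e2, e3]
    have : (-(((k:ZMod p)+1) + 1) + 1)⁻¹ = -(((k:ZMod p)+1))⁻¹ := by
      rw [show (-(((k:ZMod p)+1) + 1) + 1) = -((k:ZMod p)+1) by ring, inv_neg]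
    rw [this]; ring

lemma two_ne_zero' (hp : 3 < p) : (2 : ZMod p) ≠ 0 := by
  have : ((2:ℕ) : ZMod p) ≠ 0 := by
    rw [Ne, ZMod.natCast_eq_zero_iff]
    intro h
    have := Nat.le_of_dvd (by norm_num) h
    omega
  simpa using this

lemma hr_top (hp : 3 < p) : Hr p (p - 1) = 0 := by
  have h := hr_refl_aux (p := p) (p - 1) le_rfl
  simp only [Nat.sub_self] at h
  have h0 : Hr p 0 = 0 := by simp [Hr]
  have : (2 : ZMod p) * Hr p (p-1) = 0 := by rw [h0] at h; linear_combination -h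
  exact (mul_eq_zero.mp this).resolve_left (two_ne_zero' hp)

lemma hr_refl (hp : 3 < p) {k : ℕ} (hk : k ≤ p - 1) : Hr p (p - 1 - k) = Hr p k := by
  have := hr_refl_aux (p := p) k hk
  rw [hr_top hp] at this
  linear_combination this




lemma prod_fact (k m : ℕ) : (∏ l ∈ range m, (k + l + 1)) * k ! = (k + m)! := by
  induction m with
  | zero => simp
  | succ m ih =>
    rw [Finset.prod_range_succ, show k + (m+1) = (k+m) + 1 from rfl, Nat.factorial_succ,
      ← ih]
    ring

lemma choose_eq_prod (k m : ℕ) : m ! * (m + k).choose m = ∏ l ∈ range m, (k + l + 1) := by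
  have h := Nat.choose_mul_factorial_mul_factorial (Nat.le_add_right m k)
  have h2 : (m + k) - m = k := by omega
  rw [h2] at h
  have h3 := prod_fact k m
  have hk : 0 < k ! := Nat.factorial_pos k
  have : (m ! * (m + k).choose m) * k ! = (∏ l ∈ range m, (k + l + 1)) * k ! := by
    rw [h3, show k + m = m + k by ring, ← h]; ring
  exact Nat.eq_of_mul_eq_mul_right hk this


lemma cast_ne_zero_of_lt {i : ℕ} (h1 : 0 < i) (h2 : i < p) : ((i : ZMod p)) ≠ 0 := by
  rw [Ne, ZMod.natCast_eq_zero_iff]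
  intro h
  have := Nat.le_of_dvd h1 h
  omega

lemma fact_ne_zero {m : ℕ} (hm : m < p) : ((m ! : ZMod p)) ≠ 0 := by
  rw [Ne, ZMod.natCast_eq_zero_iff]
  intro h
  have := ((Fact.out : p.Prime).dvd_factorial).mp h
  omega

-- reflection for choose
lemma choose_refl {m k : ℕ} (hkm : k + m ≤ p - 1) :
    ((Nat.choose (p - 1 - k) m : ZMod p)) = (-1)^m * (Nat.choose (m + k) m : ZMod p) := by
  have hp2 : 2 ≤ p := (Fact.out : p.Prime).two_le
  have hmp : m < p := by omega
  apply mul_left_cancel₀ (fact_ne_zero hmp)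
  have h1 : m ! * (p - 1 - k).choose m = ∏ l ∈ range m, ((p - 1 - k - m) + l + 1) := by
    have := choose_eq_prod (p - 1 - k - m) m
    rw [show m + (p - 1 - k - m) = p - 1 - k by omega] at this
    exact this
  have h2 := choose_eq_prod k m
  have c1 : ((m ! * (p - 1 - k).choose m : ℕ) : ZMod p)
      = ∏ l ∈ range m, (((p - 1 - k - m) + l + 1 : ℕ) : ZMod p) := by
    rw [h1]; push_cast; rfl
  have c2 : ∀ l ∈ range m, (((p - 1 - k - m) + l + 1 : ℕ) : ZMod p)
      = -(((k + (m - 1 - l) : ℕ) : ZMod p) + 1) := by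
    intro l hl
    rw [mem_range] at hl
    have h : ((p - 1 - k - m) + l + 1) + (k + (m - 1 - l) + 1) = p := by omega
    have := congrArg (Nat.cast : ℕ → ZMod p) h
    push_cast at this
    rw [ZMod.natCast_self] at this
    push_cast
    linear_combination this
  rw [Finset.prod_congr rfl c2] at c1
  have c3 : (∏ x ∈ range m, -((((k + (m - 1 - x)) : ℕ) : ZMod p) + 1))
      = (-1)^m * ∏ x ∈ range m, ((((k + x) : ℕ) : ZMod p) + 1) := by
    have e : ∀ x ∈ range m, -((((k + (m - 1 - x)) : ℕ) : ZMod p) + 1)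
        = (-1) * ((((k + (m - 1 - x)) : ℕ) : ZMod p) + 1) := by intro x _; ring
    rw [Finset.prod_congr rfl e, Finset.prod_mul_distrib, Finset.prod_const, Finset.card_range]
    congr 1
    exact Finset.prod_range_reflect (fun x => (((k + x : ℕ) : ZMod p) + 1)) m
  rw [c3] at c1
  have c4 : (∏ x ∈ range m, ((((k + x) : ℕ) : ZMod p) + 1))
      = ((m ! * (m + k).choose m : ℕ) : ZMod p) := by
    rw [h2]
    push_cast
    exact (Finset.prod_congr rfl (fun x _ => by push_cast; ring)).symm
  rw [c4] at c1
  push_cast at c1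
  linear_combination c1






lemma hr_diff {k m : ℕ} :
    Hr p (k + m) - Hr p k = ∑ j ∈ range m, (((k : ZMod p) + j) + 1)⁻¹ := by
  rw [Hr, Hr, Finset.sum_range_add]
  simp only [add_sub_cancel_left]
  exact Finset.sum_congr rfl fun j _ => by push_cast; ring_nf

lemma deriv_identity {k m : ℕ} (hkm : k + m ≤ p - 1)
    (hprod : ((m ! * (m + k).choose m : ℕ) : ZMod p)
      = ∏ l ∈ range m, ((k : ZMod p) + l + 1)) :
    ((m ! : ℕ) : ZMod p) * ((m + k).choose m : ZMod p) * (Hr p (k + m) - Hr p k)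
      = ∑ j ∈ range m, ∏ l ∈ (range m).erase j, ((k : ZMod p) + l + 1) := by
  rw [hr_diff]
  push_cast at hprod
  rw [hprod, Finset.mul_sum]
  refine Finset.sum_congr rfl fun j hj => ?_
  rw [mem_range] at hj
  have hne : ((k : ZMod p) + j + 1) ≠ 0 := by
    have : (((k + j + 1 : ℕ)) : ZMod p) ≠ 0 :=
      cast_ne_zero_of_lt (by omega) (by omega)
    push_cast at this
    convert this using 2
  rw [← Finset.mul_prod_erase (range m) _ (Finset.mem_range.mpr hj)]
  field_simp

lemma sum_eval_eq_zero (P : Polynomial (ZMod p)) (hdeg : P.natDegree < p - 1) :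
    ∑ x : ZMod p, P.eval x = 0 := by
  have h : ∀ x : ZMod p, P.eval x = ∑ i ∈ range (P.natDegree + 1), P.coeff i * x ^ i :=
    fun x => P.eval_eq_sum_range (x := x)
  simp_rw [h]
  rw [Finset.sum_comm]
  apply Finset.sum_eq_zero
  intro i hi
  rw [← Finset.mul_sum, FiniteField.sum_pow_lt_card_sub_one, mul_zero]
  rw [ZMod.card p]
  rw [mem_range] at hi
  omega

lemma sum_univ_eq_range (f : ZMod p → ZMod p) :
    ∑ x : ZMod p, f x = ∑ k ∈ range p, f (k : ZMod p) := by
  haveI : NeZero p := ⟨(Fact.out : p.Prime).pos.ne'⟩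
  refine Finset.sum_nbij' (fun x => ZMod.val x) (fun k => (k : ZMod p)) ?_ ?_ ?_ ?_ ?_
  · intro a _; exact Finset.mem_range.mpr (ZMod.val_lt a)
  · intro a _; exact Finset.mem_univ _
  · intro a _; simp [ZMod.natCast_val, ZMod.cast_id]
  · intro a ha; exact ZMod.val_cast_of_lt (Finset.mem_range.mp ha)
  · intro a _; rw [ZMod.natCast_val, ZMod.cast_id]




noncomputable def gP (p m : ℕ) : Polynomial (ZMod p) :=
  ∏ l ∈ range m, (X + C ((l : ZMod p) + 1))

noncomputable def dP (p m : ℕ) : Polynomial (ZMod p) :=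
  ∑ j ∈ range m, ∏ l ∈ (range m).erase j, (X + C ((l : ZMod p) + 1))

lemma gP_eval (m : ℕ) (x : ZMod p) :
    (gP p m).eval x = ∏ l ∈ range m, (x + (l + 1)) := by
  rw [gP, Polynomial.eval_prod]
  exact Finset.prod_congr rfl fun l _ => by simp [add_assoc]

lemma dP_eval (m : ℕ) (x : ZMod p) :
    (dP p m).eval x = ∑ j ∈ range m, ∏ l ∈ (range m).erase j, (x + (l + 1)) := by
  rw [dP, Polynomial.eval_finset_sum]
  refine Finset.sum_congr rfl fun j _ => ?_
  rw [Polynomial.eval_prod]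
  exact Finset.prod_congr rfl fun l _ => by simp [add_assoc]

lemma gP_natDegree (m : ℕ) (hp : 1 < p) : (gP p m).natDegree ≤ m := by
  haveI : Nontrivial (ZMod p) := ZMod.nontrivial_iff.mpr (by omega)
  refine le_trans (Polynomial.natDegree_prod_le _ _) ?_
  have h1 : ∀ l ∈ range m, (X + C ((l : ZMod p) + 1)).natDegree ≤ 1 :=
    fun l _ => le_of_eq (natDegree_X_add_C _)
  refine le_trans (Finset.sum_le_sum h1) ?_
  simp

lemma dP_natDegree (m : ℕ) (hp : 1 < p) : (dP p m).natDegree ≤ m - 1 := by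
  haveI : Nontrivial (ZMod p) := ZMod.nontrivial_iff.mpr (by omega)
  refine Polynomial.natDegree_sum_le_of_forall_le _ _ fun j hj => ?_
  refine le_trans (Polynomial.natDegree_prod_le _ _) ?_
  have h1 : ∀ l ∈ (range m).erase j, (X + C ((l : ZMod p) + 1)).natDegree ≤ 1 :=
    fun l _ => le_of_eq (natDegree_X_add_C _)
  refine le_trans (Finset.sum_le_sum h1) ?_
  rw [Finset.sum_const, smul_eq_mul, mul_one, Finset.card_erase_of_mem hj,
    Finset.card_range]


lemma T_zero {m n : ℕ} (hn : 3 ≤ n) (hp : 3 < p) (hm : p - 1 = m * n) :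
    ∑ k ∈ range (p - m), ((m + k).choose m : ZMod p)^n * (Hr p (k+m) - Hr p k)^2 = 0 := by
  have hm1 : 1 ≤ m := by
    rcases Nat.eq_zero_or_pos m with h | h
    · subst h; simp at hm; omega
    · exact h
  have hmlt : m < p := by
    have : m ≤ m * n := Nat.le_mul_of_pos_right m (by omega)
    omega
  set P : Polynomial (ZMod p) := (gP p m)^(n-2) * (dP p m)^2 with hP
  have hdeg : P.natDegree < p - 1 := by
    have h1 : P.natDegree ≤ ((gP p m)^(n-2)).natDegree + ((dP p m)^2).natDegree :=
      natDegree_mul_le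
    have h2 : ((gP p m)^(n-2)).natDegree ≤ (n-2) * (gP p m).natDegree := natDegree_pow_le
    have h3 : ((dP p m)^2).natDegree ≤ 2 * (dP p m).natDegree := natDegree_pow_le
    have h4 := gP_natDegree (p := p) m (by omega)
    have h5 := dP_natDegree (p := p) m (by omega)
    have hb : P.natDegree ≤ (n-2) * m + 2 * (m-1) :=
      le_trans h1 (Nat.add_le_add (le_trans h2 (Nat.mul_le_mul_left _ h4))
        (le_trans h3 (Nat.mul_le_mul_left _ h5)))
    obtain ⟨a, rfl⟩ : ∃ a, n = a + 3 := ⟨n - 3, by omega⟩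
    obtain ⟨b, rfl⟩ : ∃ b, m = b + 1 := ⟨m - 1, by omega⟩
    have hlt : (a + 3 - 2) * (b + 1) + 2 * (b + 1 - 1) < p - 1 := by
      have e1 : (a + 3 - 2) * (b + 1) = (a+1)*(b+1) := by congr 1
      have e2 : (b + 1 - 1) = b := by norm_num
      rw [e1, e2]
      have : (a+1)*(b+1) + 2*b + 2 ≤ (b+1)*(a+3) := by nlinarith
      omega
    omega
  have hprodcast : ∀ k : ℕ, ((m ! * (m + k).choose m : ℕ) : ZMod p)
      = ∏ l ∈ range m, ((k : ZMod p) + l + 1) := by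
    intro k
    rw [choose_eq_prod k m]
    push_cast
    exact Finset.prod_congr rfl fun l _ => by push_cast; ring
  have key : ∀ k ∈ range (p - m), P.eval (k : ZMod p)
      = ((m ! : ℕ) : ZMod p)^n * (((m+k).choose m : ZMod p)^n * (Hr p (k+m) - Hr p k)^2) := by
    intro k hk
    rw [mem_range] at hk
    have hkm : k + m ≤ p - 1 := by omega
    have hg : (gP p m).eval (k : ZMod p)
        = ((m ! : ℕ) : ZMod p) * ((m+k).choose m : ZMod p) := by
      rw [gP_eval, show (∏ l ∈ range m, ((k:ZMod p) + (l + 1)))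
          = ∏ l ∈ range m, ((k:ZMod p) + l + 1) from
        Finset.prod_congr rfl fun l _ => by ring, ← hprodcast k]
      push_cast
      ring
    have hd : (dP p m).eval (k : ZMod p)
        = ((m ! : ℕ) : ZMod p) * ((m+k).choose m : ZMod p) * (Hr p (k+m) - Hr p k) := by
      rw [dP_eval, show (∑ j ∈ range m, ∏ l ∈ (range m).erase j, ((k:ZMod p) + (l + 1)))
          = ∑ j ∈ range m, ∏ l ∈ (range m).erase j, ((k:ZMod p) + l + 1) from
        Finset.sum_congr rfl fun j _ => Finset.prod_congr rfl fun l _ => by ring,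
        ← deriv_identity hkm (hprodcast k)]
    rw [hP, eval_mul, eval_pow, eval_pow, hg, hd]
    have hsplit : n - 2 + 2 = n := by omega
    calc (((m ! : ℕ) : ZMod p) * ((m+k).choose m : ZMod p))^(n-2)
          * (((m ! : ℕ) : ZMod p) * ((m+k).choose m : ZMod p) * (Hr p (k+m) - Hr p k))^2
        = (((m ! : ℕ) : ZMod p) * ((m+k).choose m : ZMod p))^(n-2)
          * (((m ! : ℕ) : ZMod p) * ((m+k).choose m : ZMod p))^2 * (Hr p (k+m) - Hr p k)^2 := by
          ring
      _ = (((m ! : ℕ) : ZMod p) * ((m+k).choose m : ZMod p))^n * (Hr p (k+m) - Hr p k)^2 := by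
          rw [← pow_add, hsplit]
      _ = ((m ! : ℕ) : ZMod p)^n * (((m+k).choose m : ZMod p)^n * (Hr p (k+m) - Hr p k)^2) := by
          rw [mul_pow]; ring
  have tail : ∀ k ∈ Ico (p - m) p, P.eval (k : ZMod p) = 0 := by
    intro k hk
    rw [mem_Ico] at hk
    have hg0 : (gP p m).eval (k : ZMod p) = 0 := by
      rw [gP_eval]
      refine Finset.prod_eq_zero (i := p - k - 1) (Finset.mem_range.mpr (by omega)) ?_
      have h0 : ((k + (p - k - 1) + 1 : ℕ) : ZMod p) = 0 := by
        rw [show k + (p - k - 1) + 1 = p by omega, ZMod.natCast_self]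
      push_cast at h0
      linear_combination h0
    rw [hP, eval_mul, eval_pow, hg0, zero_pow (by omega), zero_mul]
  have hsum : ∑ x : ZMod p, P.eval x = 0 := sum_eval_eq_zero P hdeg
  rw [sum_univ_eq_range] at hsum
  have hsplit2 : ∑ k ∈ Ico 0 (p - m), P.eval (k : ZMod p)
      + ∑ k ∈ Ico (p - m) p, P.eval (k : ZMod p) = ∑ k ∈ Ico 0 p, P.eval (k : ZMod p) :=
    Finset.sum_Ico_consecutive _ (Nat.zero_le _) (by omega)
  rw [← Finset.range_eq_Ico, ← Finset.range_eq_Ico] at hsplit2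
  rw [← hsplit2, Finset.sum_eq_zero tail, add_zero] at hsum
  rw [Finset.sum_congr rfl key, ← Finset.mul_sum] at hsum
  have hf : ((m ! : ℕ) : ZMod p)^n ≠ 0 := pow_ne_zero _ (fact_ne_zero hmlt)
  exact (mul_eq_zero.mp hsum).resolve_left hf

lemma S_zero {m n : ℕ} (hn : 3 ≤ n) (hp : 3 < p) (hm : p - 1 = m * n) :
    ∑ k ∈ range (p - m),
      ((m + k).choose m : ZMod p)^n * (Hr p (k+m) - Hr p k) * Hr p (k+m) = 0 := by
  have hm1 : 1 ≤ m := by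
    rcases Nat.eq_zero_or_pos m with h | h
    · subst h; simp at hm; omega
    · exact h
  have hmlt : m < p := by
    have : m ≤ m * n := Nat.le_mul_of_pos_right m (by omega)
    omega
  set f : ℕ → ZMod p :=
    fun k => ((m + k).choose m : ZMod p)^n * (Hr p (k+m) - Hr p k) * Hr p (k+m) with hf
  have hrefl := Finset.sum_range_reflect f (p - m)
  have hterm : ∀ k ∈ range (p - m), f (p - m - 1 - k)
      = ((m + k).choose m : ZMod p)^n * (Hr p k - Hr p (k+m)) * Hr p k := by
    intro k hk
    rw [mem_range] at hk
    have hkm : k + m ≤ p - 1 := by omega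
    have e1 : m + (p - m - 1 - k) = p - 1 - k := by omega
    have e2 : p - m - 1 - k + m = p - 1 - k := by omega
    have e3 : p - m - 1 - k = p - 1 - (k + m) := by omega
    rw [hf]
    simp only []
    rw [e1, e2, e3]
    rw [hr_refl hp (show k ≤ p - 1 by omega), hr_refl hp hkm, choose_refl hkm]
    have heven : Even (m * n) := by
      rw [← hm]
      have hodd : Odd p := ((Fact.out : p.Prime)).odd_of_ne_two (by omega)
      exact Nat.Odd.sub_odd hodd (by norm_num)
    have hone : ((-1 : ZMod p)^m)^n = 1 := by
      rw [← pow_mul]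
      exact Even.neg_one_pow heven
    rw [mul_pow, hone, one_mul]
  have h2S : (2 : ZMod p) * (∑ k ∈ range (p - m), f k)
      = ∑ k ∈ range (p - m), ((m + k).choose m : ZMod p)^n * (Hr p (k+m) - Hr p k)^2 := by
    calc (2 : ZMod p) * (∑ k ∈ range (p - m), f k)
        = (∑ k ∈ range (p - m), f k) + ∑ k ∈ range (p - m), f (p - m - 1 - k) := by
          rw [hrefl]; ring
      _ = ∑ k ∈ range (p - m), (f k + f (p - m - 1 - k)) := by
          rw [Finset.sum_add_distrib]
      _ = ∑ k ∈ range (p - m), ((m + k).choose m : ZMod p)^n * (Hr p (k+m) - Hr p k)^2 := by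
          refine Finset.sum_congr rfl fun k hk => ?_
          rw [hterm k hk, hf]
          ring
  rw [T_zero hn hp hm] at h2S
  have := (mul_eq_zero.mp h2S).resolve_left (two_ne_zero' hp)
  exact this

lemma icc_inv_eq_hr (k : ℕ) : ∑ i ∈ Icc 1 k, ((i : ZMod p))⁻¹ = Hr p k := by
  rw [Hr, show Icc 1 k = Ico 1 (k+1) by rw [Finset.Ico_add_one_right_eq_Icc], Finset.sum_Ico_eq_sum_range]
  simp only [Nat.add_sub_cancel]
  exact Finset.sum_congr rfl fun i _ => by push_cast; ring_nf

def aN (p k : ℕ) : ℕ := ∑ i ∈ Icc 1 k, (p-1)! / i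

lemma aQ {k : ℕ} (hk : k ≤ p - 1) :
    ((aN p k : ℚ)) = ((p-1)! : ℚ) * ∑ i ∈ Icc 1 k, (1:ℚ)/i := by
  rw [aN]
  push_cast
  rw [Finset.mul_sum]
  refine Finset.sum_congr rfl fun i hi => ?_
  rw [mem_Icc] at hi
  have hdvd : i ∣ (p-1)! := Nat.dvd_factorial (by omega) (by omega)
  have hine : ((i : ℚ)) ≠ 0 := by
    have : (0:ℚ) < i := by exact_mod_cast (by omega : 0 < i)
    exact ne_of_gt this
  rw [Nat.cast_div hdvd hine, mul_one_div]

lemma aZ {k : ℕ} (hk : k ≤ p - 1) :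
    ((aN p k : ZMod p)) = (((p-1)! : ℕ) : ZMod p) * Hr p k := by
  rw [aN]
  push_cast
  rw [← icc_inv_eq_hr, Finset.mul_sum]
  refine Finset.sum_congr rfl fun i hi => ?_
  rw [mem_Icc] at hi
  have hdvd : i ∣ (p-1)! := Nat.dvd_factorial (by omega) (by omega)
  have hine : ((i : ZMod p)) ≠ 0 := cast_ne_zero_of_lt (by omega) (by omega)
  have h1 : (((p-1)! / i : ℕ) : ZMod p) * (i : ZMod p) = (((p-1)! : ℕ) : ZMod p) := by
    rw [← Nat.cast_mul, Nat.div_mul_cancel hdvd]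
  field_simp
  exact h1

end HPV19

open HPV19 Finset Nat in
/-- `∑_{k=0}^{p-1-m} C(m+k,m)^n (∑_{i=1}^{k+m} 1/i − ∑_{i=1}^{k} 1/i) ∑_{i=1}^{k+m} 1/i ≡ 0 (mod p)`. -/
theorem harmonic_product_vanishes_mod_p (n p m : ℕ) [Fact p.Prime]
    (hn : 3 ≤ n) (hp : 3 < p) (hpn : p ≡ 1 [MOD n]) (hm : p - 1 = m * n) :
    ‖((∑ k ∈ Finset.range (p - m), (Nat.choose (m + k) m : ℚ) ^ n *
        ((∑ i ∈ Finset.Icc 1 (k + m), (1 : ℚ) / i) - ∑ i ∈ Finset.Icc 1 k, (1 : ℚ) / i) *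
        ∑ i ∈ Finset.Icc 1 (k + m), (1 : ℚ) / i : ℚ) : ℚ_[p])‖ ≤ (p : ℝ) ^ (-1 : ℤ) := by
  have hprime : p.Prime := Fact.out
  have hm1 : 1 ≤ m := by
    rcases Nat.eq_zero_or_pos m with h | h
    · subst h; simp at hm; omega
    · exact h
  have hmlt : m < p := by
    have : m ≤ m * n := Nat.le_mul_of_pos_right m (by omega)
    omega
  set Qv : ℚ := ∑ k ∈ Finset.range (p - m), (Nat.choose (m + k) m : ℚ) ^ n *
        ((∑ i ∈ Finset.Icc 1 (k + m), (1 : ℚ) / i) - ∑ i ∈ Finset.Icc 1 k, (1 : ℚ) / i) *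
        ∑ i ∈ Finset.Icc 1 (k + m), (1 : ℚ) / i with hQv
  set N : ℤ := ∑ k ∈ range (p - m), ((m+k).choose m : ℤ)^n
      * ((aN p (k+m) : ℤ) - (aN p k : ℤ)) * (aN p (k+m) : ℤ) with hNdef
  have keyQ : ((p-1)! : ℚ)^2 * Qv = (N : ℚ) := by
    rw [hQv, hNdef]
    push_cast
    rw [Finset.mul_sum]
    refine Finset.sum_congr rfl fun k hk => ?_
    rw [mem_range] at hk
    rw [aQ (p := p) (show k + m ≤ p - 1 by omega), aQ (p := p) (show k ≤ p - 1 by omega)]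
    ring
  have keyZ : ((N : ℤ) : ZMod p) = 0 := by
    rw [hNdef]
    push_cast
    have : ∀ k ∈ range (p - m), ((m+k).choose m : ZMod p)^n
        * ((aN p (k+m) : ZMod p) - (aN p k : ZMod p)) * (aN p (k+m) : ZMod p)
        = (((p-1)! : ℕ) : ZMod p)^2 * (((m + k).choose m : ZMod p)^n
            * (Hr p (k+m) - Hr p k) * Hr p (k+m)) := by
      intro k hk
      rw [mem_range] at hk
      rw [aZ (p := p) (show k + m ≤ p - 1 by omega), aZ (p := p) (show k ≤ p - 1 by omega)]
      ring
    rw [Finset.sum_congr rfl this, ← Finset.mul_sum, S_zero hn hp hm, mul_zero]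
  have hdvdN : (p : ℤ) ∣ N := by
    rwa [← ZMod.intCast_zmod_eq_zero_iff_dvd]
  have hFQ : ((p-1)! : ℚ) ≠ 0 := by positivity
  have hQeq : Qv = (N : ℚ) / ((p-1)! : ℚ)^2 := by
    rw [eq_div_iff (pow_ne_zero 2 hFQ)]
    linear_combination keyQ
  have hQp : ((Qv : ℚ) : ℚ_[p]) = ((N : ℤ) : ℚ_[p]) / ((((p-1)! : ℕ) : ℤ) : ℚ_[p])^2 := by
    rw [hQeq]
    push_cast
    ring
  have hnormF : ‖((((p-1)! : ℕ) : ℤ) : ℚ_[p])‖ = 1 := by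
    apply le_antisymm (Padic.norm_int_le_one _)
    by_contra hlt
    rw [not_le] at hlt
    have h2 := (Padic.norm_intCast_lt_one_iff).mp hlt
    have hdvd : p ∣ (p-1)! := by exact_mod_cast h2
    have := (hprime.dvd_factorial).mp hdvd
    omega
  have hnormN : ‖((N : ℤ) : ℚ_[p])‖ ≤ (p:ℝ)^(-1:ℤ) := by
    have h1 := (Padic.norm_int_le_pow_iff_dvd (p := p) N 1).mpr (by simpa using hdvdN)
    simpa using h1
  rw [hQp, norm_div, norm_pow, hnormF, one_pow, div_one]
  exact hnormN
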